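/- Let 𝔅 be an algebra of subsets of ω×2 containing all finite sets which is trivial on a cylinder C, and let (μ_n)_{n∈ω} be an admissible sequence (each μ_n identified with a finitely additive measure on P(ω×2)). Then for any sets J ⊆ I ⊆ ω, the pair (μ[J], μ[I∖J]) is 𝔅[C]-separated if and only if it is 𝔅-separated. -/

import Mathlib

/-- `𝔄` is an algebra of subsets of `S`: it contains `S`, and is closed under
complements, finite unions and finite intersections. -/
def IsSetAlgebraOn {S : Type*} (𝔄 : Set (Set S)) : Prop :=
  Set.univ ∈ 𝔄 ∧ (∀ A ∈ 𝔄, Aᶜ ∈ 𝔄) ∧ (∀ A ∈ 𝔄, ∀ B ∈ 𝔄, A ∪ B ∈ 𝔄) ∧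
    (∀ A ∈ 𝔄, ∀ B ∈ 𝔄, A ∩ B ∈ 𝔄)

/-- `m` is finitely additive on the algebra `𝔄` of subsets of `S`. -/
def FinAddOn {S : Type*} (𝔄 : Set (Set S)) (m : Set S → ℝ) : Prop :=
  ∀ A ∈ 𝔄, ∀ B ∈ 𝔄, Disjoint A B → m (A ∪ B) = m A + m B

/-- `m` has variation norm `‖m‖ = |m|(S) ≤ 1` on the algebra `𝔄`. -/
def VarLeOne {S : Type*} (𝔄 : Set (Set S)) (m : Set S → ℝ) : Prop :=
  ∀ B ∈ 𝔄, |m B| + |m Bᶜ| ≤ 1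

/-- `M₁(P(S))`: the finitely additive measures of norm at most `1` on the full power
set algebra of `S`. -/
def M1full (S : Type*) : Set (Set S → ℝ) :=
  {m | FinAddOn (Set.univ : Set (Set S)) m ∧ VarLeOne (Set.univ : Set (Set S)) m}

/-- The pair `(M, M')` is `𝔅`-separated: there are `ε > 0` and finitely many sets
`B₁, …, B_n ∈ 𝔅` such that for every `(μ, μ') ∈ M × M'` there is `i ≤ n` with
`|μ(B_i) − μ'(B_i)| ≥ ε`. -/
def SeparatedBy {S : Type*} (𝔅 : Set (Set S)) (M M' : Set (Set S → ℝ)) : Prop :=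
  ∃ ε > (0 : ℝ), ∃ n : ℕ, 0 < n ∧ ∃ B : Fin n → Set S, (∀ i, B i ∈ 𝔅) ∧
    ∀ m ∈ M, ∀ m' ∈ M', ∃ i, ε ≤ |m (B i) - m' (B i)|

/-- Membership in the algebra of sets generated by a family `G` of subsets of `S`. -/
inductive genAlgMem {S : Type*} (G : Set (Set S)) : Set S → Prop
  | base {A : Set S} : A ∈ G → genAlgMem G A
  | empty : genAlgMem G ∅
  | compl {A : Set S} : genAlgMem G A → genAlgMem G Aᶜ
  | union {A B : Set S} : genAlgMem G A → genAlgMem G B → genAlgMem G (A ∪ B)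

/-- The algebra of subsets of `S` generated by a family `G`. -/
def genAlg {S : Type*} (G : Set (Set S)) : Set (Set S) := {A | genAlgMem G A}

/-- The underlying countable set `ω × 2`. -/
abbrev S2 : Type := ℕ × Fin 2

/-- The cylinder `C₀ × 2 ⊆ ω × 2`. -/
def cyl (C₀ : Set ℕ) : Set S2 := {s : S2 | s.1 ∈ C₀}

/-- The cylinder `c_k = {(k,0), (k,1)}`. -/
def cylAt (k : ℕ) : Set S2 := {s : S2 | s.1 = k}

/-- The finitely additive measure on `P(ω × 2)` induced by an `ℓ₁` function `x`:
`B ↦ Σ_{s ∈ B} x(s)`. -/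
noncomputable def msr (x : S2 → ℝ) (B : Set S2) : ℝ := ∑' s : ↥B, x (s : S2)

/-- A sequence `(μ_n)` in the unit ball of `ℓ₁(ω × 2)` is admissible if
`μ_n(c_k) = 0` for all `n, k` and `inf_n |μ_n(n,0)| > 0`. -/
def Admissible (μ : ℕ → S2 → ℝ) : Prop :=
  (∀ n, Summable fun s => |μ n s|) ∧ (∀ n, (∑' s, |μ n s|) ≤ 1) ∧
    (∀ n k, μ n (k, 0) + μ n (k, 1) = 0) ∧ ∃ c > (0 : ℝ), ∀ n, c ≤ |μ n (n, 0)|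

/-- `μ[J] = {μ_n : n ∈ J}`, as a set of finitely additive measures on `P(ω × 2)`. -/
noncomputable def MsrSet (μ : ℕ → S2 → ℝ) (J : Set ℕ) : Set (Set S2 → ℝ) :=
  {m | ∃ n ∈ J, m = msr (μ n)}

/-- The algebra `𝔅` is trivial on the cylinder `C`: for every `B ∈ 𝔅` either `B ∩ C`
or `C ∖ B` is finite. -/
def TrivialOn (𝔅 : Set (Set S2)) (C : Set S2) : Prop :=
  ∀ B ∈ 𝔅, (B ∩ C).Finite ∨ (C \ B).Finite

section Aux

lemma msr_union {x : S2 → ℝ} (hx : Summable x) {A B : Set S2} (h : Disjoint A B) :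
    msr x (A ∪ B) = msr x A + msr x B :=
  Summable.tsum_union_disjoint h (hx.subtype _) (hx.subtype _)

lemma msr_split {x : S2 → ℝ} (hx : Summable x) (B C : Set S2) :
    msr x B = msr x (B ∩ C) + msr x (B \ C) := by
  rw [← msr_union hx (Set.disjoint_sdiff_right.mono_left Set.inter_subset_right),
    Set.inter_union_diff]

lemma msr_cyl_zero {x : S2 → ℝ} (hx : Summable x) (hp : ∀ k, x (k, 0) + x (k, 1) = 0)
    (C₀ : Set ℕ) : msr x (cyl C₀) = 0 := by
  have h1 : msr x (cyl C₀) = ∑' s : S2, (cyl C₀).indicator x s := tsum_subtype _ _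
  rw [h1, Summable.tsum_prod' (hx.indicator _) (fun _ => .of_finite)]
  have h2 : ∀ k : ℕ, (∑' i : Fin 2, (cyl C₀).indicator x (k, i)) = 0 := by
    intro k
    rw [tsum_fintype, Fin.sum_univ_two]
    by_cases hk : k ∈ C₀
    · have m0 : ((k, 0) : S2) ∈ cyl C₀ := hk
      have m1 : ((k, 1) : S2) ∈ cyl C₀ := hk
      rw [Set.indicator_of_mem m0, Set.indicator_of_mem m1, hp k]
    · have m0 : ((k, 0) : S2) ∉ cyl C₀ := hk
      have m1 : ((k, 1) : S2) ∉ cyl C₀ := hk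
      rw [Set.indicator_of_notMem m0, Set.indicator_of_notMem m1, add_zero]
  simp only [h2, tsum_zero]

lemma gen_repr {𝔅 : Set (Set S2)} (h𝔅 : IsSetAlgebraOn 𝔅) {C A : Set S2}
    (hA : A ∈ genAlg (𝔅 ∪ {C})) :
    ∃ B₁ ∈ 𝔅, ∃ B₂ ∈ 𝔅, A = (B₁ ∩ C) ∪ (B₂ \ C) := by
  have hEmpty : (∅ : Set S2) ∈ 𝔅 := by
    have := h𝔅.2.1 _ h𝔅.1; simpa using this
  induction hA with
  | base h =>
    rcases h with hB | hC
    · exact ⟨_, hB, _, hB, by rw [Set.inter_union_diff]⟩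
    · refine ⟨Set.univ, h𝔅.1, ∅, hEmpty, ?_⟩
      simp [Set.mem_singleton_iff.mp hC]
  | empty => exact ⟨∅, hEmpty, ∅, hEmpty, by simp⟩
  | compl _ ih =>
    obtain ⟨B₁, hB₁, B₂, hB₂, rfl⟩ := ih
    refine ⟨B₁ᶜ, h𝔅.2.1 _ hB₁, B₂ᶜ, h𝔅.2.1 _ hB₂, ?_⟩
    ext s
    by_cases hs : s ∈ C <;> simp [hs]
  | union _ _ ih₁ ih₂ =>
    obtain ⟨B₁, hB₁, B₂, hB₂, rfl⟩ := ih₁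
    obtain ⟨B₁', hB₁', B₂', hB₂', rfl⟩ := ih₂
    refine ⟨B₁ ∪ B₁', h𝔅.2.2.1 _ hB₁ _ hB₁', B₂ ∪ B₂', h𝔅.2.2.1 _ hB₂ _ hB₂', ?_⟩
    ext s
    by_cases hs : s ∈ C <;> simp [hs] <;> tauto

lemma key_repr {𝔅 : Set (Set S2)} (h𝔅 : IsSetAlgebraOn 𝔅)
    (hfin : ∀ F : Set S2, F.Finite → F ∈ 𝔅)
    {C₀ : Set ℕ} (htriv : TrivialOn 𝔅 (cyl C₀)) {μ : ℕ → S2 → ℝ}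
    (hsum : ∀ n, Summable (μ n)) (hpair : ∀ n k, μ n (k, 0) + μ n (k, 1) = 0)
    {A : Set S2} (hA : A ∈ genAlg (𝔅 ∪ {cyl C₀})) :
    ∃ D : Fin 3 → Set S2, (∀ j, D j ∈ 𝔅) ∧ ∃ c : Fin 3 → ℝ, (∀ j, |c j| ≤ 1) ∧
      ∀ n, msr (μ n) A = ∑ j, c j * msr (μ n) (D j) := by
  obtain ⟨B₁, hB₁, B₂, hB₂, rfl⟩ := gen_repr h𝔅 hA
  set C := cyl C₀ with hC
  -- express msr (μ n) (B ∩ C) for B ∈ 𝔅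
  have hBC : ∀ B ∈ 𝔅, ∃ D ∈ 𝔅, ∃ σ : ℝ, |σ| ≤ 1 ∧
      ∀ n, msr (μ n) (B ∩ C) = σ * msr (μ n) D := by
    intro B hB
    rcases htriv B hB with hf | hf
    · exact ⟨B ∩ C, hfin _ hf, 1, by norm_num, fun n => by ring⟩
    · refine ⟨C \ B, hfin _ hf, -1, by norm_num, fun n => ?_⟩
      have := msr_split (hsum n) C B
      rw [msr_cyl_zero (hsum n) (hpair n) C₀, Set.inter_comm] at this
      linarith
  obtain ⟨D₁, hD₁, σ₁, hσ₁, h₁⟩ := hBC B₁ hB₁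
  obtain ⟨D₂, hD₂, σ₂, hσ₂, h₂⟩ := hBC B₂ hB₂
  refine ⟨![D₁, B₂, D₂], fun j => by fin_cases j <;> assumption,
    ![σ₁, 1, -σ₂], fun j => by fin_cases j <;> simp [abs_neg, *], fun n => ?_⟩
  have hdisj : Disjoint (B₁ ∩ C) (B₂ \ C) :=
    Set.disjoint_left.mpr fun s hs hs' => hs'.2 hs.2
  have e1 : msr (μ n) ((B₁ ∩ C) ∪ (B₂ \ C)) = msr (μ n) (B₁ ∩ C) + msr (μ n) (B₂ \ C) :=
    msr_union (hsum n) hdisj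
  have e2 := msr_split (hsum n) B₂ C
  have e3 := h₁ n
  have e4 := h₂ n
  simp only [Fin.sum_univ_three, Matrix.cons_val_zero, Matrix.cons_val_one, Matrix.head_cons,
    Matrix.cons_val_two, Matrix.tail_cons]
  linarith

end Aux

/-- If `𝔅` is an algebra of subsets of `ω × 2` containing all finite sets which is
trivial on a cylinder `C`, and `(μ_n)` is an admissible sequence, then for any
`J ⊆ I ⊆ ω` the pair `(μ[J], μ[I∖J])` is `𝔅[C]`-separated if and only if it is
`𝔅`-separated. -/

theorem statement15 (𝔅 : Set (Set S2)) (h𝔅 : IsSetAlgebraOn 𝔅)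
    (hfin : ∀ F : Set S2, F.Finite → F ∈ 𝔅)
    (C₀ : Set ℕ) (htriv : TrivialOn 𝔅 (cyl C₀))
    (μ : ℕ → S2 → ℝ) (hμ : Admissible μ)
    (J I : Set ℕ) (hJI : J ⊆ I) :
    SeparatedBy (genAlg (𝔅 ∪ {cyl C₀})) (MsrSet μ J) (MsrSet μ (I \ J)) ↔
      SeparatedBy 𝔅 (MsrSet μ J) (MsrSet μ (I \ J)) := by
  constructor
  · rintro ⟨ε, hε, n, hn, B, hBmem, hsep⟩
    have hsum : ∀ m, Summable (μ m) := fun m => (hμ.1 m).of_abs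
    have hpair := hμ.2.2.1
    choose D hD c hc hrepr using fun i =>
      key_repr h𝔅 hfin htriv hsum hpair (hBmem i)
    refine ⟨ε / 3, by linarith, n * 3, Nat.mul_pos hn (by norm_num),
      fun k => D (finProdFinEquiv.symm k).1 (finProdFinEquiv.symm k).2,
      fun k => hD _ _, ?_⟩
    rintro m ⟨a, _, rfl⟩ m' ⟨b, _, rfl⟩
    obtain ⟨i, hi⟩ := hsep _ ⟨a, ‹_›, rfl⟩ _ ⟨b, ‹_›, rfl⟩
    have hdiff : msr (μ a) (B i) - msr (μ b) (B i) =
        ∑ j, c i j * (msr (μ a) (D i j) - msr (μ b) (D i j)) := by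
      rw [hrepr i a, hrepr i b, ← Finset.sum_sub_distrib]
      exact Finset.sum_congr rfl fun j _ => by ring
    have hbound : ε ≤ ∑ j, |msr (μ a) (D i j) - msr (μ b) (D i j)| := by
      refine hi.trans ?_
      rw [hdiff]
      refine (Finset.abs_sum_le_sum_abs _ _).trans ?_
      refine Finset.sum_le_sum fun j _ => ?_
      rw [abs_mul]
      calc |c i j| * |msr (μ a) (D i j) - msr (μ b) (D i j)|
          ≤ 1 * |msr (μ a) (D i j) - msr (μ b) (D i j)| := by
            exact mul_le_mul_of_nonneg_right (hc i j) (abs_nonneg _)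
        _ = _ := one_mul _
    have hex : ∃ j : Fin 3, ε / 3 ≤ |msr (μ a) (D i j) - msr (μ b) (D i j)| := by
      by_contra h
      push_neg at h
      have h0 := h 0; have h1 := h 1; have h2 := h 2
      rw [Fin.sum_univ_three] at hbound
      linarith
    obtain ⟨j, hj⟩ := hex
    refine ⟨finProdFinEquiv (i, j), ?_⟩
    simpa using hj
  · rintro ⟨ε, hε, n, hn, B, hBmem, hsep⟩
    exact ⟨ε, hε, n, hn, B, fun i => genAlgMem.base (Or.inl (hBmem i)), hsep⟩
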